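/- arXiv:2311.11854 — 3 statements merged into one kernel-verified Lean document; each statement's English description precedes it below -/
import Mathlib

section
/- For every natural numbers d ≥ 1 and n with n ≥ d, and every t ∈ [0,t*], the nested oscillatory integral admits the exact decomposition G_d(t) = S_n^d(t) + E_n^d(t). -/
noncomputable section

variable {A : Type*} [NormedRing A] [NormedAlgebra ℂ A] [CompleteSpace A]

/-- Iterated commutator: `adL L 0 x = x`, `adL L (k+1) x = L·(adL L k x) − (adL L k x)·L`. -/
def adL (L : A) : ℕ → A → A
  | 0, x => x
  | k+1, x => L * adL L k x - adL L k x * L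

/-- `Nop L α k l r` is the operator `N(l,r)` relative to the multi-index `k` (1-based
entries `k 1, k 2, …`): `N(l,r) = ad_L^{k_l}(α)` if `l = r`,
`N(l,r) = ad_L^{k_r}(α·N(l,r−1))` if `l < r`, and `N(l,r) = 1` if `l > r`. -/
def Nop (L α : A) (k : ℕ → ℕ) (l : ℕ) : ℕ → A
  | 0 => if l = 0 then adL L (k 0) α else 1
  | r+1 =>
    if r + 1 < l then 1
    else if l = r + 1 then adL L (k (r + 1)) α
    else adL L (k (r + 1)) (α * Nop L α k l r)

/-- The coefficients `a_j^ℓ = ∏_{r=0}^{j−1} (j−r)^{−(k_{ℓ−r}+1)}` (with `a_0^ℓ = 1`),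
viewed as complex scalars. -/
def coefA (k : ℕ → ℕ) (j ℓ : ℕ) : ℂ :=
  ∏ r ∈ Finset.range j, (((j - r : ℕ) : ℂ) ^ (k (ℓ - r) + 1))⁻¹

/-- The coefficients `b_j^ℓ = j^{−k_ℓ}·∏_{r=1}^{j−1} (j−r)^{−(k_{ℓ−r}+1)}` for `j ≥ 1`
(with `b_0^ℓ = 1`), viewed as complex scalars. -/
def coefB (k : ℕ → ℕ) (j ℓ : ℕ) : ℂ :=
  if j = 0 then 1
  else ((j : ℂ) ^ (k ℓ))⁻¹ * ∏ r ∈ Finset.Ico 1 j, (((j - r : ℕ) : ℂ) ^ (k (ℓ - r) + 1))⁻¹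

/-- `Fc L α k ℓ` is `F_ℓ`: `F₀ = 1`, `F_ℓ = −Σ_{m=0}^{ℓ−1} a_{ℓ−m}^ℓ·N(m+1,ℓ)·F_m`. -/
def Fc (L α : A) (k : ℕ → ℕ) : ℕ → A
  | 0 => 1
  | ℓ+1 => -∑ m ∈ (Finset.range (ℓ + 1)).attach,
      coefA k (ℓ + 1 - m.1) (ℓ + 1) • (Nop L α k (m.1 + 1) (ℓ + 1) * Fc L α k m.1)
  decreasing_by exact Finset.mem_range.mp m.2

/-- Extension of a `d`-tuple `κ = (k₁,…,k_d)` to a 1-based sequence `ℕ → ℕ`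
(with `kfun d κ i = k_i` for `1 ≤ i ≤ d`). -/
def kfun (d : ℕ) (κ : Fin d → ℕ) : ℕ → ℕ :=
  fun i => if h : 1 ≤ i ∧ i ≤ d then κ ⟨i - 1, by omega⟩ else 0

/-- The `d`-times nested oscillatory integral `G_d(t) = T^d e^{tL} u₀`:
`G₀(t) = exp(tL)·u₀`, `G_d(t) = ∫₀ᵗ exp((t−τ)L)·α·e^{iωτ}·G_{d−1}(τ) dτ`. -/
def Gfun (L α u₀ : A) (ω : ℝ) : ℕ → ℝ → A
  | 0, t => NormedSpace.exp ((t : ℂ) • L) * u₀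
  | d+1, t => ∫ τ in (0:ℝ)..t,
      Complex.exp (Complex.I * ω * τ) •
        (NormedSpace.exp (((t - τ : ℝ) : ℂ) • L) * α * Gfun L α u₀ ω d τ)

/-- The finite series
`S_n^d(t) = Σ_{k∈ℕ^d, 0 ≤ |k^d| ≤ n−d} (iω)^{−(d+|k^d|)} ·
  Σ_{ℓ=0}^{d} a_{d−ℓ}^d · e^{(d−ℓ)iωt} · N(ℓ+1,d) · exp(tL) · F_ℓ · u₀`. -/
def Sser (L α u₀ : A) (ω : ℝ) (n d : ℕ) (t : ℝ) : A :=
  ∑ m ∈ Finset.range (n - d + 1), ∑ κ ∈ Finset.Nat.antidiagonalTuple d m,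
    ((Complex.I * ω) ^ (d + m))⁻¹ •
      ∑ ℓ ∈ Finset.range (d + 1),
        (coefA (kfun d κ) (d - ℓ) d *
            Complex.exp (((d - ℓ : ℕ) : ℂ) * (Complex.I * ω * t))) •
          (Nop L α (kfun d κ) (ℓ + 1) d *
            (NormedSpace.exp ((t : ℂ) • L) * (Fc L α (kfun d κ) ℓ * u₀)))

/-- The remainder: `E_n^0(t) = 0` and
`E_n^d(t) = (iω)^{−n} · Σ_{k∈ℕ^d, |k^d| = n−d+1} Σ_{ℓ=0}^{d−1} b_{d−ℓ}^d ·
  (∫₀ᵗ exp((t−τ)L)·N(ℓ+1,d)·exp(τL)·e^{(d−ℓ)iωτ} dτ) · F_ℓ · u₀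
  + ∫₀ᵗ exp((t−τ)L)·α·e^{iωτ}·E_n^{d−1}(τ) dτ`. -/
def Eser (L α u₀ : A) (ω : ℝ) (n : ℕ) : ℕ → ℝ → A
  | 0, _ => 0
  | d+1, t =>
    ((Complex.I * ω) ^ n)⁻¹ •
      (∑ κ ∈ Finset.Nat.antidiagonalTuple (d + 1) (n - (d + 1) + 1),
        ∑ ℓ ∈ Finset.range (d + 1),
          coefB (kfun (d + 1) κ) (d + 1 - ℓ) (d + 1) •
            ((∫ τ in (0:ℝ)..t,
                Complex.exp (((d + 1 - ℓ : ℕ) : ℂ) * (Complex.I * ω * τ)) •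
                  (NormedSpace.exp (((t - τ : ℝ) : ℂ) • L) *
                    Nop L α (kfun (d + 1) κ) (ℓ + 1) (d + 1) *
                    NormedSpace.exp ((τ : ℂ) • L))) *
              (Fc L α (kfun (d + 1) κ) ℓ * u₀)))
    + ∫ τ in (0:ℝ)..t,
        Complex.exp (Complex.I * ω * τ) •
          (NormedSpace.exp (((t - τ : ℝ) : ℂ) • L) * α * Eser L α u₀ ω n d τ)


open NormedSpace

section Aux
set_option linter.unusedSectionVars false
variable {A : Type*} [NormedRing A] [NormedAlgebra ℂ A] [CompleteSpace A]

lemma expL_eq_real (L : A) (s : ℝ) : exp ((s:ℂ) • L) = exp (s • L) :=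
  congrArg exp (Complex.coe_smul s L)

lemma hasDerivAt_expL (L : A) (s : ℝ) :
    HasDerivAt (fun u : ℝ => exp ((u:ℂ) • L)) (exp ((s:ℂ) • L) * L) s := by
  simp only [expL_eq_real]
  exact hasDerivAt_exp_smul_const (𝕂 := ℝ) L s

lemma commute_expL (L : A) (s : ℝ) : exp ((s:ℂ) • L) * L = L * exp ((s:ℂ) • L) :=
  (((Commute.refl L).smul_left ((s:ℂ))).exp_left)

lemma continuous_expL (L : A) : Continuous (fun u : ℝ => exp ((u:ℂ) • L)) := by
  simp only [expL_eq_real]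
  exact continuous_iff_continuousAt.2 fun s => (hasDerivAt_exp_smul_const (𝕂 := ℝ) L s).continuousAt

lemma hasDerivAt_expL_rev (L : A) (t τ : ℝ) :
    HasDerivAt (fun u : ℝ => exp (((t:ℂ) - u) • L))
      (-(exp (((t:ℂ) - τ) • L) * L)) τ := by
  have h2 : HasDerivAt (fun u : ℝ => t - u) (-1) τ := by
    simpa using (hasDerivAt_id τ).const_sub t
  have h := (hasDerivAt_expL L (t - τ)).scomp τ h2
  have h3 : (fun u : ℝ => exp (((t:ℂ) - u) • L)) = ((fun u : ℝ => exp ((u:ℂ) • L)) ∘ (fun u : ℝ => t - u)) := by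
    ext u; norm_cast
  rw [h3]
  simpa using h

lemma hasDerivAt_cexp_real (c : ℂ) (τ : ℝ) :
    HasDerivAt (fun u : ℝ => Complex.exp (c * u)) (c * Complex.exp (c * τ)) τ := by
  have h : HasDerivAt (fun z : ℂ => Complex.exp (c * z)) (c * Complex.exp (c * τ)) (τ:ℂ) := by
    exact (((hasDerivAt_id (τ:ℂ)).const_mul c).cexp).congr_deriv (by simp [mul_comm])
  exact h.comp_ofReal

/-- the basic oscillatory integral -/
def Jint (L M : A) (c : ℂ) (t : ℝ) : A :=
  ∫ τ in (0:ℝ)..t, Complex.exp (c * τ) •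
    (exp (((t:ℂ) - τ) • L) * M * exp ((τ:ℂ) • L))

lemma continuous_Jint_integrand (L M : A) (c : ℂ) (t : ℝ) :
    Continuous (fun τ : ℝ => Complex.exp (c * τ) •
      (exp (((t:ℂ) - τ) • L) * M * exp ((τ:ℂ) • L))) := by
  apply Continuous.smul
  · exact Complex.continuous_exp.comp (continuous_const.mul Complex.continuous_ofReal)
  · apply Continuous.mul
    · apply Continuous.mul _ continuous_const
      have : Continuous (fun τ : ℝ => exp (((t - τ : ℝ) : ℂ) • L)) :=
        (continuous_expL L).comp (continuous_const.sub continuous_id)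
      simpa [Complex.ofReal_sub] using this
    · exact continuous_expL L

lemma hasDerivAt_H (L M : A) (t τ : ℝ) :
    HasDerivAt (fun u : ℝ => exp (((t:ℂ) - u) • L) * M * exp ((u:ℂ) • L))
      (-(exp (((t:ℂ) - τ) • L) * adL L 1 M * exp ((τ:ℂ) • L))) τ := by
  have h1 := (hasDerivAt_expL_rev L t τ).mul_const M
  have h2 := h1.mul (hasDerivAt_expL L τ)
  refine h2.congr_deriv ?_
  symm
  rw [commute_expL]
  simp only [adL]
  ring_nf
  noncomm_ring

lemma hasDerivAt_g (L M : A) (c : ℂ) (t τ : ℝ) :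
    HasDerivAt (fun u : ℝ => Complex.exp (c * u) •
        (exp (((t:ℂ) - u) • L) * M * exp ((u:ℂ) • L)))
      (c • (Complex.exp (c * τ) • (exp (((t:ℂ) - τ) • L) * M * exp ((τ:ℂ) • L)))
        - Complex.exp (c * τ) •
            (exp (((t:ℂ) - τ) • L) * adL L 1 M * exp ((τ:ℂ) • L))) τ := by
  have h := (hasDerivAt_cexp_real c τ).smul (hasDerivAt_H L M t τ)
  refine h.congr_deriv ?_
  symm
  rw [smul_smul, mul_comm c]
  module

lemma Jint_ibp (L M : A) (c : ℂ) (hc : c ≠ 0) (t : ℝ) :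
    Jint L M c t = c⁻¹ • (Complex.exp (c * t) • (M * exp ((t:ℂ) • L))
        - exp ((t:ℂ) • L) * M) + c⁻¹ • Jint L (adL L 1 M) c t := by
  have hftc : ∫ τ in (0:ℝ)..t,
      (c • (Complex.exp (c * τ) • (exp (((t:ℂ) - τ) • L) * M * exp ((τ:ℂ) • L)))
        - Complex.exp (c * τ) •
            (exp (((t:ℂ) - τ) • L) * adL L 1 M * exp ((τ:ℂ) • L)))
      = Complex.exp (c * t) • (M * exp ((t:ℂ) • L)) - exp ((t:ℂ) • L) * M := by
    rw [intervalIntegral.integral_eq_sub_of_hasDerivAt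
      (fun τ _ => hasDerivAt_g L M c t τ)]
    · simp
    · apply Continuous.intervalIntegrable
      exact ((continuous_Jint_integrand L M c t).const_smul c).sub
        (continuous_Jint_integrand L (adL L 1 M) c t)
  rw [intervalIntegral.integral_sub (f := fun τ : ℝ => c • (Complex.exp (c * τ) •
          (exp (((t:ℂ) - τ) • L) * M * exp ((τ:ℂ) • L))))
      (((continuous_Jint_integrand L M c t).const_smul c).intervalIntegrable _ _)
      ((continuous_Jint_integrand L (adL L 1 M) c t).intervalIntegrable _ _),
    intervalIntegral.integral_smul] at hftc
  have h5 : c • Jint L M c t = (Complex.exp (c * t) • (M * exp ((t:ℂ) • L))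
      - exp ((t:ℂ) • L) * M) + Jint L (adL L 1 M) c t := by
    rw [← hftc]; unfold Jint; abel
  calc Jint L M c t = c⁻¹ • (c • Jint L M c t) := by rw [smul_smul, inv_mul_cancel₀ hc, one_smul]
  _ = _ := by rw [h5, smul_add]

lemma Jint_iter (L M : A) (c : ℂ) (hc : c ≠ 0) (t : ℝ) (s : ℕ) :
    Jint L M c t = (∑ j ∈ Finset.range s, (c ^ (j+1))⁻¹ •
        (Complex.exp (c * t) • (adL L j M * exp ((t:ℂ) • L))
          - exp ((t:ℂ) • L) * adL L j M))
      + (c ^ s)⁻¹ • Jint L (adL L s M) c t := by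
  induction s with
  | zero => simp [adL]
  | succ s ih =>
    rw [ih, Finset.sum_range_succ, Jint_ibp L (adL L s M) c hc t]
    have h1 : adL L 1 (adL L s M) = adL L (s+1) M := rfl
    rw [h1, smul_add, smul_smul, smul_smul]
    have h2 : (c^s)⁻¹ * c⁻¹ = (c ^ (s+1))⁻¹ := by rw [pow_succ, mul_inv]
    rw [h2]
    abel

end Aux


section Comb
set_option linter.unusedSectionVars false
variable {A : Type*} [NormedRing A] [NormedAlgebra ℂ A] [CompleteSpace A]

lemma kfun_snoc_le {d : ℕ} (κ : Fin d → ℕ) (j : ℕ) {i : ℕ} (hi : i ≤ d) :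
    kfun (d+1) (Fin.snoc κ j) i = kfun d κ i := by
  unfold kfun
  by_cases h : 1 ≤ i ∧ i ≤ d
  · rw [dif_pos ⟨h.1, by omega⟩, dif_pos h]
    have : (⟨i - 1, by omega⟩ : Fin (d+1)) = Fin.castSucc ⟨i - 1, by omega⟩ := rfl
    rw [this, Fin.snoc_castSucc]
  · rw [dif_neg (by omega), dif_neg h]

lemma kfun_snoc_last {d : ℕ} (κ : Fin d → ℕ) (j : ℕ) :
    kfun (d+1) (Fin.snoc κ j) (d+1) = j := by
  unfold kfun
  rw [dif_pos ⟨by omega, le_refl _⟩]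
  have : (⟨d + 1 - 1, by omega⟩ : Fin (d+1)) = Fin.last d := by
    ext; simp
  rw [this, Fin.snoc_last]

lemma Nop_congr (L α : A) {k k' : ℕ → ℕ} (l r : ℕ) (h : ∀ i ≤ r, k i = k' i) :
    Nop L α k l r = Nop L α k' l r := by
  induction r with
  | zero => simp only [Nop, h 0 le_rfl]
  | succ r ih =>
    simp only [Nop, h (r+1) le_rfl, ih (fun i hi => h i (by omega))]

lemma Nop_of_gt (L α : A) (k : ℕ → ℕ) {l r : ℕ} (h : r < l) : Nop L α k l r = 1 := by
  cases r with
  | zero => simp only [Nop]; rw [if_neg (by omega)]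
  | succ r => simp only [Nop]; rw [if_pos h]

lemma Nop_snoc (L α : A) {d : ℕ} (κ : Fin d → ℕ) (j : ℕ) {l : ℕ} (hl : l ≤ d) :
    Nop L α (kfun (d+1) (Fin.snoc κ j)) (l+1) (d+1)
      = adL L j (α * Nop L α (kfun d κ) (l+1) d) := by
  have hNc : Nop L α (kfun (d+1) (Fin.snoc κ j)) (l+1) d = Nop L α (kfun d κ) (l+1) d :=
    Nop_congr L α _ _ (fun i hi => kfun_snoc_le κ j hi)
  rcases eq_or_lt_of_le hl with h | h
  · subst h
    show Nop L α (kfun (l+1) (Fin.snoc κ j)) (l+1) (l+1) = _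
    simp only [Nop, lt_irrefl, if_false, if_true, Nop_of_gt L α (kfun l κ) (Nat.lt_succ_self l),
      mul_one, kfun_snoc_last]
  · show Nop L α (kfun (d+1) (Fin.snoc κ j)) (l+1) (d+1) = _
    simp only [Nop]
    rw [if_neg (by omega), if_neg (by omega), kfun_snoc_last, hNc]

lemma coefA_congr {k k' : ℕ → ℕ} (j l : ℕ) (h : ∀ r < j, k (l - r) = k' (l - r)) :
    coefA k j l = coefA k' j l := by
  unfold coefA
  exact Finset.prod_congr rfl (fun r hr => by rw [h r (Finset.mem_range.mp hr)])

lemma coefA_snoc {d : ℕ} (κ : Fin d → ℕ) (j : ℕ) {l : ℕ} (hl : l ≤ d) :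
    coefA (kfun (d+1) (Fin.snoc κ j)) (d+1-l) (d+1)
      = (((d+1-l : ℕ) : ℂ) ^ (j+1))⁻¹ * coefA (kfun d κ) (d-l) d := by
  unfold coefA
  have hd1 : d + 1 - l = (d - l) + 1 := by omega
  rw [hd1, Finset.prod_range_succ', mul_comm]
  congr 1
  · rw [show d + 1 - 0 = d + 1 from rfl, kfun_snoc_last,
      show (d - l + 1 - 0 : ℕ) = d + 1 - l from by omega, ← hd1]
  · apply Finset.prod_congr rfl
    intro r hr
    have hr' := Finset.mem_range.mp hr
    rw [show d + 1 - (r + 1) = d - r from by omega, kfun_snoc_le κ j (by omega),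
      show (d - l + 1 - (r + 1) : ℕ) = d - l - r from by omega]

lemma coefB_snoc {d : ℕ} (κ : Fin d → ℕ) (s : ℕ) {l : ℕ} (hl : l ≤ d) :
    coefB (kfun (d+1) (Fin.snoc κ s)) (d+1-l) (d+1)
      = (((d+1-l : ℕ) : ℂ) ^ s)⁻¹ * coefA (kfun d κ) (d-l) d := by
  unfold coefB coefA
  rw [if_neg (by omega), kfun_snoc_last]
  congr 1
  rw [Finset.prod_Ico_eq_prod_range]
  apply Finset.prod_congr (by rw [show d + 1 - l - 1 = d - l from by omega])
  intro r hr
  have hr' := Finset.mem_range.mp hr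
  rw [show d + 1 - (1 + r) = d - r from by omega, kfun_snoc_le κ s (by omega),
    show (d + 1 - l - (1 + r) : ℕ) = d - l - r from by omega]

lemma Fc_congr (L α : A) {k k' : ℕ → ℕ} (l : ℕ) (h : ∀ i ≤ l, k i = k' i) :
    Fc L α k l = Fc L α k' l := by
  induction l using Nat.strong_induction_on with
  | _ l ih =>
    cases l with
    | zero => simp [Fc]
    | succ l =>
      simp only [Fc]
      congr 1
      apply Finset.sum_congr rfl
      intro m _
      have hm : m.1 < l + 1 := Finset.mem_range.mp m.2
      rw [coefA_congr _ _ (fun r hr => h ((l+1) - r) (by omega)),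
        Nop_congr L α _ _ (fun i hi => h i hi),
        ih m.1 (by omega) (fun i hi => h i (by omega))]

lemma Fc_snoc (L α : A) {d : ℕ} (κ : Fin d → ℕ) (j : ℕ) {l : ℕ} (hl : l ≤ d) :
    Fc L α (kfun (d+1) (Fin.snoc κ j)) l = Fc L α (kfun d κ) l :=
  Fc_congr L α l (fun i hi => kfun_snoc_le κ j (by omega))

lemma sum_snoc_eq {d : ℕ} (κ : Fin d → ℕ) (j : ℕ) :
    (∑ i, Fin.snoc κ j i) = (∑ i, κ i) + j := by
  rw [Fin.sum_univ_castSucc]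
  simp

/-- reindexing for the remainder sum -/
lemma sum_snoc_bij {β : Type*} [AddCommMonoid β] (d N : ℕ) (h : (Fin (d+1) → ℕ) → β) :
    ∑ m ∈ Finset.range (N+1), ∑ κ ∈ Finset.Nat.antidiagonalTuple d m, h (Fin.snoc κ (N - m))
      = ∑ κ' ∈ Finset.Nat.antidiagonalTuple (d+1) N, h κ' := by
  rw [Finset.sum_sigma']
  apply Finset.sum_nbij' (fun p => Fin.snoc p.2 (N - p.1))
    (fun κ' => ⟨∑ i, Fin.init κ' i, Fin.init κ'⟩)
  · rintro ⟨m, κ⟩ hp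
    simp only [Finset.mem_sigma, Finset.mem_range, Finset.Nat.mem_antidiagonalTuple] at hp ⊢
    rw [sum_snoc_eq, hp.2]
    omega
  · intro κ' hκ'
    simp only [Finset.Nat.mem_antidiagonalTuple, Finset.mem_sigma, Finset.mem_range] at hκ' ⊢
    have hsum : (∑ i, Fin.init κ' i) + κ' (Fin.last d) = N := by
      rw [← hκ', Fin.sum_univ_castSucc]; rfl
    exact ⟨by omega, trivial⟩
  · rintro ⟨m, κ⟩ hp
    simp only [Finset.mem_sigma, Finset.mem_range, Finset.Nat.mem_antidiagonalTuple] at hp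
    show (⟨∑ i, Fin.init (Fin.snoc κ (N - m) : Fin (d+1) → ℕ) i,
      Fin.init (Fin.snoc κ (N - m) : Fin (d+1) → ℕ)⟩ : Σ _ : ℕ, (Fin d → ℕ)) = ⟨m, κ⟩
    simp only [Fin.init_snoc]
    rw [hp.2]
  · intro κ' hκ'
    simp only [Finset.Nat.mem_antidiagonalTuple] at hκ'
    have hsum : (∑ i, Fin.init κ' i) + κ' (Fin.last d) = N := by
      rw [← hκ', Fin.sum_univ_castSucc]; rfl
    have : N - (∑ i, Fin.init κ' i) = κ' (Fin.last d) := by omega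
    rw [this, Fin.snoc_init_self]
  · rintro ⟨m, κ⟩ hp
    simp only [Finset.mem_sigma, Finset.mem_range, Finset.Nat.mem_antidiagonalTuple] at hp
    rfl

/-- reindexing for the boundary sum -/
lemma sum_snoc_bij2 {β : Type*} [AddCommMonoid β] (d N : ℕ) (h : ℕ → (Fin (d+1) → ℕ) → β) :
    ∑ m ∈ Finset.range (N+1), ∑ κ ∈ Finset.Nat.antidiagonalTuple d m,
        ∑ j ∈ Finset.range (N - m), h (m + j) (Fin.snoc κ j)
      = ∑ m' ∈ Finset.range N, ∑ κ' ∈ Finset.Nat.antidiagonalTuple (d+1) m', h m' κ' := by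
  rw [Finset.sum_sigma', Finset.sum_sigma', Finset.sum_sigma']
  apply Finset.sum_nbij' (fun p => (⟨p.1.1 + p.2, Fin.snoc p.1.2 p.2⟩ :
      (_ : ℕ) × (Fin (d+1) → ℕ)))
    (fun q => ⟨⟨∑ i, Fin.init q.2 i, Fin.init q.2⟩, q.2 (Fin.last d)⟩)
  · rintro ⟨⟨m, κ⟩, j⟩ hp
    simp only [Finset.mem_sigma, Finset.mem_range, Finset.Nat.mem_antidiagonalTuple] at hp ⊢
    obtain ⟨⟨hm, hκ⟩, hj⟩ := hp
    constructor
    · omega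
    · rw [sum_snoc_eq, hκ]
  · rintro ⟨m', κ'⟩ hq
    simp only [Finset.mem_sigma, Finset.mem_range, Finset.Nat.mem_antidiagonalTuple] at hq ⊢
    obtain ⟨hm', hκ'⟩ := hq
    have hsum : (∑ i, Fin.init κ' i) + κ' (Fin.last d) = m' := by
      rw [← hκ', Fin.sum_univ_castSucc]; rfl
    exact ⟨⟨by omega, trivial⟩, by omega⟩
  · rintro ⟨⟨m, κ⟩, j⟩ hp
    simp only [Finset.mem_sigma, Finset.mem_range, Finset.Nat.mem_antidiagonalTuple] at hp
    obtain ⟨⟨hm, hκ⟩, hj⟩ := hp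
    show (⟨⟨∑ i, Fin.init (Fin.snoc κ j : Fin (d+1) → ℕ) i,
        Fin.init (Fin.snoc κ j : Fin (d+1) → ℕ)⟩,
        (Fin.snoc κ j : Fin (d+1) → ℕ) (Fin.last d)⟩ :
        Σ _ : Σ _ : ℕ, (Fin d → ℕ), ℕ) = ⟨⟨m, κ⟩, j⟩
    simp only [Fin.init_snoc, Fin.snoc_last]
    rw [hκ]
  · rintro ⟨m', κ'⟩ hq
    simp only [Finset.mem_sigma, Finset.mem_range, Finset.Nat.mem_antidiagonalTuple] at hq
    obtain ⟨hm', hκ'⟩ := hq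
    have hsum : (∑ i, Fin.init κ' i) + κ' (Fin.last d) = m' := by
      rw [← hκ', Fin.sum_univ_castSucc]; rfl
    show (⟨(∑ i, Fin.init κ' i) + κ' (Fin.last d),
        Fin.snoc (Fin.init κ') (κ' (Fin.last d))⟩ : Σ _ : ℕ, (Fin (d+1) → ℕ)) = ⟨m', κ'⟩
    rw [hsum, Fin.snoc_init_self]
  · rintro ⟨⟨m, κ⟩, j⟩ hp
    rfl

end Comb


section Main
set_option linter.unusedSectionVars false
set_option maxHeartbeats 1000000
variable {A : Type*} [NormedRing A] [NormedAlgebra ℂ A] [CompleteSpace A]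

/-- first part of the remainder -/
def Efirst (L α u₀ : A) (ω : ℝ) (n d : ℕ) (t : ℝ) : A :=
  ((Complex.I * ω) ^ n)⁻¹ •
    (∑ κ ∈ Finset.Nat.antidiagonalTuple (d + 1) (n - (d + 1) + 1),
      ∑ ℓ ∈ Finset.range (d + 1),
        coefB (kfun (d + 1) κ) (d + 1 - ℓ) (d + 1) •
          ((∫ τ in (0:ℝ)..t,
              Complex.exp (((d + 1 - ℓ : ℕ) : ℂ) * (Complex.I * ω * τ)) •
                (exp (((t - τ : ℝ) : ℂ) • L) *
                  Nop L α (kfun (d + 1) κ) (ℓ + 1) (d + 1) *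
                  exp ((τ : ℂ) • L))) *
            (Fc L α (kfun (d + 1) κ) ℓ * u₀)))

lemma Eser_succ (L α u₀ : A) (ω : ℝ) (n d : ℕ) (t : ℝ) :
    Eser L α u₀ ω n (d+1) t = Efirst L α u₀ ω n d t
      + ∫ τ in (0:ℝ)..t,
          Complex.exp (Complex.I * ω * τ) •
            (exp (((t - τ : ℝ) : ℂ) • L) * α * Eser L α u₀ ω n d τ) := rfl

lemma continuous_Sser (L α u₀ : A) (ω : ℝ) (n d : ℕ) :
    Continuous (fun τ : ℝ => Sser L α u₀ ω n d τ) := by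
  unfold Sser
  apply continuous_finset_sum
  intro m _
  apply continuous_finset_sum
  intro κ _
  apply Continuous.const_smul
  apply continuous_finset_sum
  intro ℓ _
  apply Continuous.smul
  · exact continuous_const.mul (Complex.continuous_exp.comp
      ((continuous_const.mul (continuous_const.mul Complex.continuous_ofReal))))
  · exact continuous_const.mul ((continuous_expL L).mul continuous_const)

lemma continuous_Gfun (L α u₀ : A) (ω : ℝ) (d : ℕ) :
    Continuous (Gfun L α u₀ ω d) := by
  induction d with
  | zero =>
    show Continuous (fun t : ℝ => exp ((t:ℂ) • L) * u₀)
    exact (continuous_expL L).mul continuous_const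
  | succ d ih =>
    show Continuous (fun t : ℝ => ∫ τ in (0:ℝ)..t,
      Complex.exp (Complex.I * ω * τ) •
        (exp (((t - τ : ℝ) : ℂ) • L) * α * Gfun L α u₀ ω d τ))
    apply intervalIntegral.continuous_parametric_intervalIntegral_of_continuous
      (f := fun (x : ℝ) (τ : ℝ) => Complex.exp (Complex.I * ω * τ) •
        (exp (((x - τ : ℝ) : ℂ) • L) * α * Gfun L α u₀ ω d τ)) _ continuous_id
    apply Continuous.smul
    · exact Complex.continuous_exp.comp
        (continuous_const.mul (Complex.continuous_ofReal.comp continuous_snd))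
    · apply Continuous.mul
      · apply Continuous.mul _ continuous_const
        exact (continuous_expL L).comp ((continuous_fst.sub continuous_snd))
      · exact ih.comp continuous_snd

lemma continuous_S_integrand (L α u₀ : A) (ω : ℝ) (n d : ℕ) (t : ℝ) :
    Continuous (fun τ : ℝ => Complex.exp (Complex.I * ω * τ) •
      (exp (((t - τ : ℝ) : ℂ) • L) * α * Sser L α u₀ ω n d τ)) := by
  apply Continuous.smul
  · exact Complex.continuous_exp.comp (continuous_const.mul Complex.continuous_ofReal)
  · apply Continuous.mul
    · exact ((continuous_expL L).comp (continuous_const.sub continuous_id)).mul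
        continuous_const
    · exact continuous_Sser L α u₀ ω n d

lemma continuous_G_integrand (L α u₀ : A) (ω : ℝ) (d : ℕ) (t : ℝ) :
    Continuous (fun τ : ℝ => Complex.exp (Complex.I * ω * τ) •
      (exp (((t - τ : ℝ) : ℂ) • L) * α * Gfun L α u₀ ω d τ)) := by
  apply Continuous.smul
  · exact Complex.continuous_exp.comp (continuous_const.mul Complex.continuous_ofReal)
  · apply Continuous.mul
    · exact ((continuous_expL L).comp (continuous_const.sub continuous_id)).mul
        continuous_const
    · exact continuous_Gfun L α u₀ ω d

lemma Sser_zero (L α u₀ : A) (ω : ℝ) (n : ℕ) (t : ℝ) :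
    Sser L α u₀ ω n 0 t = exp ((t:ℂ) • L) * u₀ := by
  unfold Sser
  rw [Finset.sum_eq_single 0]
  · rw [Finset.Nat.antidiagonalTuple_zero_right, Finset.sum_singleton]
    simp [coefA, Nop, Fc]
  · intro m _ hm
    obtain ⟨m', rfl⟩ := Nat.exists_eq_succ_of_ne_zero hm
    rw [Finset.Nat.antidiagonalTuple_zero_succ, Finset.sum_empty]
  · intro h
    exact absurd (Finset.mem_range.mpr (by omega)) h

lemma integral_mul_const_right (f : ℝ → A) (hf : Continuous f) (Y : A) (a b : ℝ) :
    (∫ τ in a..b, f τ * Y) = (∫ τ in a..b, f τ) * Y := by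
  have h := ((ContinuousLinearMap.mul ℂ A).flip Y).intervalIntegral_comp_comm
    (hf.intervalIntegrable (μ := MeasureTheory.volume) a b)
  simpa using h

lemma Sstep (L α u₀ : A) (ω : ℝ) (hω : ω ≠ 0) (n d : ℕ) (hdn : d + 1 ≤ n) (t : ℝ) :
    (∫ τ in (0:ℝ)..t, Complex.exp (Complex.I * ω * τ) •
      (exp (((t - τ : ℝ) : ℂ) • L) * α * Sser L α u₀ ω n d τ))
    = Sser L α u₀ ω n (d+1) t + Efirst L α u₀ ω n d t := by
  have hiw : (Complex.I * (ω:ℂ)) ≠ 0 :=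
    mul_ne_zero Complex.I_ne_zero (Complex.ofReal_ne_zero.mpr hω)
  -- STEP A : pointwise expansion of the integrand
  have hpt : ∀ τ : ℝ, Complex.exp (Complex.I * ω * τ) •
      (exp (((t - τ : ℝ):ℂ) • L) * α * Sser L α u₀ ω n d τ)
      = ∑ m ∈ Finset.range (n - d + 1), ∑ κ ∈ Finset.Nat.antidiagonalTuple d m,
          ∑ ℓ ∈ Finset.range (d + 1),
          (coefA (kfun d κ) (d - ℓ) d * ((Complex.I * ω) ^ (d + m))⁻¹) •
            ((Complex.exp ((((d+1-ℓ:ℕ):ℂ) * (Complex.I * ω)) * τ) •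
              (exp (((t:ℂ) - τ) • L) * (α * Nop L α (kfun d κ) (ℓ+1) d) *
                exp ((τ:ℂ) • L)))
              * (Fc L α (kfun d κ) ℓ * u₀)) := by
    intro τ
    unfold Sser
    simp only [Finset.mul_sum, mul_smul_comm, Finset.smul_sum, smul_smul, smul_mul_assoc]
    refine Finset.sum_congr rfl fun m hm => Finset.sum_congr rfl fun κ hκ =>
      Finset.sum_congr rfl fun ℓ hℓ => ?_
    have hℓd : ℓ ≤ d := Nat.lt_succ_iff.mp (Finset.mem_range.mp hℓ)
    rw [show (((d+1-ℓ:ℕ):ℂ) * (Complex.I * ω)) * τ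
        = Complex.I * ω * τ + ((d-ℓ:ℕ):ℂ) * (Complex.I * ω * τ) from by
      rw [Nat.cast_sub (by omega : ℓ ≤ d + 1), Nat.cast_sub hℓd]; push_cast; ring,
      Complex.exp_add]
    simp only [Complex.ofReal_sub, mul_assoc]
    congr 1
    ring
  -- STEP B : integrate term by term
  have hint : (∫ τ in (0:ℝ)..t, Complex.exp (Complex.I * ω * τ) •
      (exp (((t - τ : ℝ):ℂ) • L) * α * Sser L α u₀ ω n d τ))
      = ∑ m ∈ Finset.range (n - d + 1), ∑ κ ∈ Finset.Nat.antidiagonalTuple d m,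
          ∑ ℓ ∈ Finset.range (d + 1),
          (coefA (kfun d κ) (d - ℓ) d * ((Complex.I * ω) ^ (d + m))⁻¹) •
            (Jint L (α * Nop L α (kfun d κ) (ℓ+1) d)
                (((d+1-ℓ:ℕ):ℂ) * (Complex.I * ω)) t
              * (Fc L α (kfun d κ) ℓ * u₀)) := by
    simp only [hpt]
    have hcont : ∀ (M Y : A) (c c' : ℂ), Continuous (fun τ : ℝ =>
        c' • ((Complex.exp (c * τ) •
          (exp (((t:ℂ) - τ) • L) * M * exp ((τ:ℂ) • L))) * Y)) :=
      fun M Y c c' => ((continuous_Jint_integrand L M c t).mul continuous_const).const_smul c'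
    rw [intervalIntegral.integral_finset_sum (fun m _ =>
      (continuous_finset_sum _ (fun κ _ => continuous_finset_sum _ (fun ℓ _ =>
        hcont _ _ _ _))).intervalIntegrable _ _)]
    refine Finset.sum_congr rfl fun m hm => ?_
    rw [intervalIntegral.integral_finset_sum (fun κ _ =>
      (continuous_finset_sum _ (fun ℓ _ => hcont _ _ _ _)).intervalIntegrable _ _)]
    refine Finset.sum_congr rfl fun κ hκ => ?_
    rw [intervalIntegral.integral_finset_sum (fun ℓ _ =>
      (hcont _ _ _ _).intervalIntegrable _ _)]
    refine Finset.sum_congr rfl fun ℓ hℓ => ?_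
    rw [intervalIntegral.integral_smul]
    congr 1
    exact integral_mul_const_right _ (continuous_Jint_integrand L _ _ t) _ 0 t
  rw [hint]
  -- STEP C : iterated integration by parts on each `Jint`, then reindex
  have hμiw : ∀ ℓ : ℕ, ℓ ≤ d → (((d+1-ℓ:ℕ):ℂ) * (Complex.I * ω)) ≠ 0 :=
    fun ℓ hℓ => mul_ne_zero (Nat.cast_ne_zero.mpr (by omega)) hiw
  have hexp : ∀ m ∈ Finset.range (n - d + 1),
      (∑ κ ∈ Finset.Nat.antidiagonalTuple d m, ∑ ℓ ∈ Finset.range (d + 1),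
        (coefA (kfun d κ) (d - ℓ) d * ((Complex.I * ω) ^ (d + m))⁻¹) •
          (Jint L (α * Nop L α (kfun d κ) (ℓ+1) d)
              (((d+1-ℓ:ℕ):ℂ) * (Complex.I * ω)) t
            * (Fc L α (kfun d κ) ℓ * u₀)))
      = ∑ κ ∈ Finset.Nat.antidiagonalTuple d m,
          ((∑ j ∈ Finset.range (n - d - m), ∑ ℓ ∈ Finset.range (d + 1),
            ((coefA (kfun (d+1) (Fin.snoc κ j)) (d+1-ℓ) (d+1) *
                ((Complex.I * ω) ^ (d+1+(m+j)))⁻¹) •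
              ((Complex.exp ((((d+1-ℓ:ℕ):ℂ) * (Complex.I * ω)) * t) •
                (Nop L α (kfun (d+1) (Fin.snoc κ j)) (ℓ+1) (d+1) * exp ((t:ℂ) • L)))
                * (Fc L α (kfun (d+1) (Fin.snoc κ j)) ℓ * u₀))
             - (coefA (kfun (d+1) (Fin.snoc κ j)) (d+1-ℓ) (d+1) *
                ((Complex.I * ω) ^ (d+1+(m+j)))⁻¹) •
              ((exp ((t:ℂ) • L) * Nop L α (kfun (d+1) (Fin.snoc κ j)) (ℓ+1) (d+1))
                * (Fc L α (kfun (d+1) (Fin.snoc κ j)) ℓ * u₀)))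
          + ∑ ℓ ∈ Finset.range (d + 1),
            (coefB (kfun (d+1) (Fin.snoc κ (n-d-m))) (d+1-ℓ) (d+1) *
                ((Complex.I * ω) ^ n)⁻¹) •
              (Jint L (Nop L α (kfun (d+1) (Fin.snoc κ (n-d-m))) (ℓ+1) (d+1))
                  (((d+1-ℓ:ℕ):ℂ) * (Complex.I * ω)) t
                * (Fc L α (kfun (d+1) (Fin.snoc κ (n-d-m))) ℓ * u₀)))) := by
    intro m hm
    have hmnd : m ≤ n - d := Nat.lt_succ_iff.mp (Finset.mem_range.mp hm)
    refine Finset.sum_congr rfl fun κ hκ => ?_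
    rw [← Finset.sum_comm]
    rw [← Finset.sum_add_distrib]
    refine Finset.sum_congr rfl fun ℓ hℓ => ?_
    have hℓd : ℓ ≤ d := Nat.lt_succ_iff.mp (Finset.mem_range.mp hℓ)
    rw [Jint_iter L _ _ (hμiw ℓ hℓd) t (n - d - m), add_mul, smul_add, Finset.sum_mul,
      Finset.smul_sum]
    congr 1
    · refine Finset.sum_congr rfl fun j hj => ?_
      rw [smul_mul_assoc, smul_smul, sub_mul, smul_sub]
      rw [Nop_snoc L α κ j hℓd, Fc_snoc L α κ j hℓd]
      have hsc : coefA (kfun d κ) (d - ℓ) d * ((Complex.I * ω) ^ (d + m))⁻¹ *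
          (((((d+1-ℓ:ℕ):ℂ) * (Complex.I * ω)) ^ (j+1))⁻¹)
          = coefA (kfun (d+1) (Fin.snoc κ j)) (d+1-ℓ) (d+1) *
              ((Complex.I * ω) ^ (d+1+(m+j)))⁻¹ := by
        rw [coefA_snoc κ j hℓd, mul_pow,
          show d+1+(m+j) = (d+m)+(j+1) from by omega, pow_add, mul_inv, mul_inv]
        ring
      rw [hsc]
    · rw [smul_mul_assoc, smul_smul]
      rw [Nop_snoc L α κ (n-d-m) hℓd, Fc_snoc L α κ (n-d-m) hℓd]
      have hsc : coefA (kfun d κ) (d - ℓ) d * ((Complex.I * ω) ^ (d + m))⁻¹ *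
          (((((d+1-ℓ:ℕ):ℂ) * (Complex.I * ω)) ^ (n-d-m))⁻¹)
          = coefB (kfun (d+1) (Fin.snoc κ (n-d-m))) (d+1-ℓ) (d+1) *
              ((Complex.I * ω) ^ n)⁻¹ := by
        have hn : ((Complex.I * (ω:ℂ)) ^ n)⁻¹
            = ((Complex.I * (ω:ℂ)) ^ (d+m))⁻¹ * ((Complex.I * (ω:ℂ)) ^ (n-d-m))⁻¹ := by
          rw [← mul_inv, ← pow_add, show (d+m)+(n-d-m) = n from by omega]
        rw [coefB_snoc κ (n-d-m) hℓd, mul_pow, hn, mul_inv]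
        ring
      rw [hsc]
  rw [Finset.sum_congr rfl hexp]
  rw [Finset.sum_congr rfl (fun m (_ : m ∈ Finset.range (n - d + 1)) =>
    Finset.sum_add_distrib (s := Finset.Nat.antidiagonalTuple d m))]
  rw [Finset.sum_add_distrib]
  congr 1
  -- boundary part = Sser (d+1)
  · rw [sum_snoc_bij2 d (n - d) (fun m' κ' =>
      ∑ ℓ ∈ Finset.range (d + 1),
        ((coefA (kfun (d+1) κ') (d+1-ℓ) (d+1) * ((Complex.I * ω) ^ (d+1+m'))⁻¹) •
          ((Complex.exp ((((d+1-ℓ:ℕ):ℂ) * (Complex.I * ω)) * t) •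
            (Nop L α (kfun (d+1) κ') (ℓ+1) (d+1) * exp ((t:ℂ) • L)))
            * (Fc L α (kfun (d+1) κ') ℓ * u₀))
         - (coefA (kfun (d+1) κ') (d+1-ℓ) (d+1) * ((Complex.I * ω) ^ (d+1+m'))⁻¹) •
          ((exp ((t:ℂ) • L) * Nop L α (kfun (d+1) κ') (ℓ+1) (d+1))
            * (Fc L α (kfun (d+1) κ') ℓ * u₀))))]
    unfold Sser
    rw [show n - (d+1) + 1 = n - d from by omega]
    refine Finset.sum_congr rfl fun m' hm' => Finset.sum_congr rfl fun κ' hκ' => ?_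
    conv_rhs => rw [Finset.smul_sum, Finset.sum_range_succ]
    rw [Finset.sum_sub_distrib]
    have hA : (∑ ℓ ∈ Finset.range (d + 1),
        (coefA (kfun (d+1) κ') (d+1-ℓ) (d+1) * ((Complex.I * ω) ^ (d+1+m'))⁻¹) •
          ((Complex.exp ((((d+1-ℓ:ℕ):ℂ) * (Complex.I * ω)) * t) •
            (Nop L α (kfun (d+1) κ') (ℓ+1) (d+1) * exp ((t:ℂ) • L)))
            * (Fc L α (kfun (d+1) κ') ℓ * u₀)))
        = ∑ ℓ ∈ Finset.range (d + 1),
          ((Complex.I * ω) ^ (d+1+m'))⁻¹ •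
            ((coefA (kfun (d+1) κ') (d+1-ℓ) (d+1) *
              Complex.exp (((d+1-ℓ:ℕ):ℂ) * (Complex.I * ω * t))) •
              (Nop L α (kfun (d+1) κ') (ℓ+1) (d+1) *
                (exp ((t:ℂ) • L) * (Fc L α (kfun (d+1) κ') ℓ * u₀)))) := by
      refine Finset.sum_congr rfl fun ℓ hℓ => ?_
      simp only [smul_smul, smul_mul_assoc, mul_assoc]
      congr 1
      ring
    have hC : ((Complex.I * ω) ^ (d+1+m'))⁻¹ •
        ((coefA (kfun (d+1) κ') (d+1-(d+1)) (d+1) *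
          Complex.exp (((d+1-(d+1):ℕ):ℂ) * (Complex.I * ω * t))) •
          (Nop L α (kfun (d+1) κ') ((d+1)+1) (d+1) *
            (exp ((t:ℂ) • L) * (Fc L α (kfun (d+1) κ') (d+1) * u₀))))
        = - ∑ ℓ ∈ Finset.range (d + 1),
          (coefA (kfun (d+1) κ') (d+1-ℓ) (d+1) * ((Complex.I * ω) ^ (d+1+m'))⁻¹) •
            ((exp ((t:ℂ) • L) * Nop L α (kfun (d+1) κ') (ℓ+1) (d+1))
              * (Fc L α (kfun (d+1) κ') ℓ * u₀)) := by
      rw [Nat.sub_self, Nop_of_gt L α _ (by omega)]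
      rw [show Fc L α (kfun (d+1) κ') (d+1)
          = -∑ p ∈ (Finset.range (d + 1)).attach,
            coefA (kfun (d+1) κ') (d + 1 - p.1) (d + 1) •
              (Nop L α (kfun (d+1) κ') (p.1 + 1) (d + 1) *
                Fc L α (kfun (d+1) κ') p.1) from by rw [Fc]]
      rw [Finset.sum_attach (Finset.range (d+1)) (fun p =>
        coefA (kfun (d+1) κ') (d + 1 - p) (d + 1) •
          (Nop L α (kfun (d+1) κ') (p + 1) (d + 1) * Fc L α (kfun (d+1) κ') p))]
      simp only [coefA, Finset.range_zero, Finset.prod_empty, Nat.cast_zero, zero_mul,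
        Complex.exp_zero, mul_one, one_mul, one_smul, neg_mul, mul_neg, neg_smul, smul_neg,
        Finset.mul_sum, Finset.sum_mul, Finset.smul_sum, mul_smul_comm, smul_mul_assoc,
        smul_smul, mul_assoc, Finset.sum_neg_distrib]
      congr 1
      refine Finset.sum_congr rfl fun ℓ hℓ => ?_
      congr 1
      ring
    rw [hA, hC]
    abel
  -- remainder part = Efirst
  · rw [show (∑ m ∈ Finset.range (n - d + 1), ∑ κ ∈ Finset.Nat.antidiagonalTuple d m,
        ∑ ℓ ∈ Finset.range (d + 1),
          (coefB (kfun (d+1) (Fin.snoc κ (n-d-m))) (d+1-ℓ) (d+1) *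
              ((Complex.I * ω) ^ n)⁻¹) •
            (Jint L (Nop L α (kfun (d+1) (Fin.snoc κ (n-d-m))) (ℓ+1) (d+1))
                (((d+1-ℓ:ℕ):ℂ) * (Complex.I * ω)) t
              * (Fc L α (kfun (d+1) (Fin.snoc κ (n-d-m))) ℓ * u₀)))
      = ∑ κ' ∈ Finset.Nat.antidiagonalTuple (d+1) (n-d),
        ∑ ℓ ∈ Finset.range (d + 1),
          (coefB (kfun (d+1) κ') (d+1-ℓ) (d+1) * ((Complex.I * ω) ^ n)⁻¹) •
            (Jint L (Nop L α (kfun (d+1) κ') (ℓ+1) (d+1))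
                (((d+1-ℓ:ℕ):ℂ) * (Complex.I * ω)) t
              * (Fc L α (kfun (d+1) κ') ℓ * u₀))
      from sum_snoc_bij d (n - d) (fun κ' => ∑ ℓ ∈ Finset.range (d + 1),
        (coefB (kfun (d+1) κ') (d+1-ℓ) (d+1) * ((Complex.I * ω) ^ n)⁻¹) •
          (Jint L (Nop L α (kfun (d+1) κ') (ℓ+1) (d+1))
              (((d+1-ℓ:ℕ):ℂ) * (Complex.I * ω)) t
            * (Fc L α (kfun (d+1) κ') ℓ * u₀)))]
    unfold Efirst
    rw [show n - (d+1) + 1 = n - d from by omega, Finset.smul_sum]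
    refine Finset.sum_congr rfl fun κ' hκ' => ?_
    rw [Finset.smul_sum]
    refine Finset.sum_congr rfl fun ℓ hℓ => ?_
    have hJ : (∫ τ in (0:ℝ)..t,
        Complex.exp (((d + 1 - ℓ : ℕ) : ℂ) * (Complex.I * ω * τ)) •
          (exp (((t - τ : ℝ) : ℂ) • L) * Nop L α (kfun (d + 1) κ') (ℓ + 1) (d + 1) *
            exp ((τ : ℂ) • L)))
        = Jint L (Nop L α (kfun (d+1) κ') (ℓ+1) (d+1))
            (((d+1-ℓ:ℕ):ℂ) * (Complex.I * ω)) t := by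
      unfold Jint
      simp only [Complex.ofReal_sub, mul_assoc]
    rw [hJ, smul_smul]
    congr 1
    ring

end Main

/-- For every `d ≥ 1` and `n ≥ d`, and every `t ∈ [0,t*]`, the nested
oscillatory integral admits the exact decomposition `G_d(t) = S_n^d(t) + E_n^d(t)`. -/
theorem stmt11 (L α u₀ : A) (T : ℝ) (hT : 0 < T) (ω : ℝ) (hω : 0 < ω)
    (d n : ℕ) (hd : 1 ≤ d) (hnd : d ≤ n) (t : ℝ) (ht : t ∈ Set.Icc (0:ℝ) T) :
    Gfun L α u₀ ω d t = Sser L α u₀ ω n d t + Eser L α u₀ ω n d t := by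
  have key : ∀ d' : ℕ, d' ≤ n → ∀ s : ℝ, s ∈ Set.Icc (0:ℝ) T →
      Gfun L α u₀ ω d' s = Sser L α u₀ ω n d' s + Eser L α u₀ ω n d' s := by
    intro d'
    induction d' with
    | zero =>
      intro _ s _
      show exp ((s:ℂ) • L) * u₀ = _
      rw [Sser_zero, show Eser L α u₀ ω n 0 s = 0 from rfl, add_zero]
    | succ d ih =>
      intro hle s hs
      have hωI : Complex.I * ω ≠ 0 :=
        mul_ne_zero Complex.I_ne_zero (Complex.ofReal_ne_zero.mpr (ne_of_gt hω))
      have hEint : (∫ τ in (0:ℝ)..s,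
          Complex.exp (Complex.I * ω * τ) •
            (exp (((s - τ : ℝ) : ℂ) • L) * α * Eser L α u₀ ω n d τ))
          = (∫ τ in (0:ℝ)..s, Complex.exp (Complex.I * ω * τ) •
              (exp (((s - τ : ℝ) : ℂ) • L) * α * Gfun L α u₀ ω d τ))
            - ∫ τ in (0:ℝ)..s, Complex.exp (Complex.I * ω * τ) •
              (exp (((s - τ : ℝ) : ℂ) • L) * α * Sser L α u₀ ω n d τ) := by
        rw [← intervalIntegral.integral_sub
          ((continuous_G_integrand L α u₀ ω d s).intervalIntegrable _ _)
          ((continuous_S_integrand L α u₀ ω n d s).intervalIntegrable _ _)]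
        apply intervalIntegral.integral_congr
        intro τ hτ
        rw [Set.uIcc_of_le hs.1] at hτ
        have hτ' : τ ∈ Set.Icc (0:ℝ) T := ⟨hτ.1, le_trans hτ.2 hs.2⟩
        have h1 := ih (by omega) τ hτ'
        have h2 : Eser L α u₀ ω n d τ = Gfun L α u₀ ω d τ - Sser L α u₀ ω n d τ := by
          rw [h1]; abel
        show Complex.exp (Complex.I * ω * τ) • (exp (((s - τ : ℝ):ℂ) • L) * α * Eser L α u₀ ω n d τ) = _
        rw [h2, mul_sub, smul_sub]
      have hG : Gfun L α u₀ ω (d+1) s = ∫ τ in (0:ℝ)..s,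
          Complex.exp (Complex.I * ω * τ) •
            (exp (((s - τ : ℝ) : ℂ) • L) * α * Gfun L α u₀ ω d τ) := rfl
      rw [hG, Eser_succ, ← add_assoc, ← Sstep L α u₀ ω (ne_of_gt hω) n d hle s, hEint]
      abel
  exact key d hnd t ht
end
end

section
/- For every natural numbers d ≥ 1 and n with n ≥ d, there exists a constant C̄ ≥ 0, independent of ω, such that for all real ω ≥ 1, sup_{t∈[0,t*]} ‖S_n^d(t)‖ ≤ C̄·ω^{−d}. -/
noncomputable section

variable {A : Type*} [NormedRing A] [NormedAlgebra ℂ A] [CompleteSpace A]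

lemma my_norm_exp_le (x : A) :
    ‖NormedSpace.exp x‖ ≤ max ‖(1:A)‖ 1 * Real.exp ‖x‖ := by
  rw [NormedSpace.exp_eq_tsum (𝕂 := ℂ)]
  refine le_trans (norm_tsum_le_tsum_norm (NormedSpace.norm_expSeries_summable' x)) ?_
  rw [Real.exp_eq_exp_ℝ, NormedSpace.exp_eq_tsum (𝕂 := ℝ), ← tsum_mul_left]
  refine Summable.tsum_le_tsum ?_ (NormedSpace.norm_expSeries_summable' x) ?_
  · intro n
    rw [norm_smul, norm_inv, Complex.norm_natCast, smul_eq_mul]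
    rcases Nat.eq_zero_or_pos n with h | h
    · simp [h]
    · calc ((n.factorial :ℝ))⁻¹ * ‖x ^ n‖ ≤ (n.factorial:ℝ)⁻¹ * ‖x‖ ^ n := by
            gcongr; exact norm_pow_le' x h
        _ ≤ max ‖(1:A)‖ 1 * ((n.factorial:ℝ)⁻¹ * ‖x‖ ^ n) := by
            exact le_mul_of_one_le_left (by positivity) (le_max_right _ _)
  · apply Summable.mul_left
    have := NormedSpace.expSeries_summable' (𝕂 := ℝ) ‖x‖
    simpa [smul_eq_mul] using this

/-- For every `d ≥ 1` and `n ≥ d`, there exists a constant `C̄ ≥ 0`,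
independent of `ω`, such that for all real `ω ≥ 1`,
`sup_{t∈[0,t*]} ‖S_n^d(t)‖ ≤ C̄·ω^{−d}`. -/
theorem stmt12 (L α u₀ : A) (T : ℝ) (hT : 0 < T)
    (d n : ℕ) (hd : 1 ≤ d) (hnd : d ≤ n) :
    ∃ C : ℝ, 0 ≤ C ∧ ∀ ω : ℝ, 1 ≤ ω → ∀ t ∈ Set.Icc (0:ℝ) T,
      ‖Sser L α u₀ ω n d t‖ ≤ C * (ω ^ d)⁻¹ := by
  classical
  set M : ℝ := max ‖(1:A)‖ 1 * Real.exp (T * ‖L‖) with hMdef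
  have hM0 : 0 ≤ M := by positivity
  refine ⟨∑ m ∈ Finset.range (n - d + 1), ∑ κ ∈ Finset.Nat.antidiagonalTuple d m,
      ∑ ℓ ∈ Finset.range (d + 1),
        ‖coefA (kfun d κ) (d - ℓ) d‖ * (‖Nop L α (kfun d κ) (ℓ + 1) d‖ *
          (M * ‖Fc L α (kfun d κ) ℓ * u₀‖)), ?_, ?_⟩
  · refine Finset.sum_nonneg fun m _ => Finset.sum_nonneg fun κ _ =>
      Finset.sum_nonneg fun ℓ _ => by positivity
  · intro ω hω t ht
    have hω0 : (0:ℝ) < ω := lt_of_lt_of_le one_pos hω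
    have hexp : ‖NormedSpace.exp ((t:ℂ) • L)‖ ≤ M := by
      refine (my_norm_exp_le _).trans ?_
      rw [hMdef]
      refine mul_le_mul_of_nonneg_left (Real.exp_le_exp.mpr ?_)
        (le_trans zero_le_one (le_max_right _ _))
      rw [norm_smul, Complex.norm_real, Real.norm_eq_abs, abs_of_nonneg ht.1]
      exact mul_le_mul_of_nonneg_right ht.2 (norm_nonneg L)
    rw [Sser, Finset.sum_mul]
    refine (norm_sum_le _ _).trans (Finset.sum_le_sum fun m _ => ?_)
    rw [Finset.sum_mul]
    refine (norm_sum_le _ _).trans (Finset.sum_le_sum fun κ _ => ?_)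
    rw [norm_smul]
    have hIω : ‖((Complex.I * (ω:ℂ)) ^ (d + m))⁻¹‖ = ((ω:ℝ) ^ (d + m))⁻¹ := by
      rw [norm_inv, norm_pow, norm_mul, Complex.norm_I, one_mul, Complex.norm_real,
        Real.norm_eq_abs, abs_of_pos hω0]
    rw [hIω]
    have h1 : ((ω:ℝ) ^ (d + m))⁻¹ ≤ ((ω:ℝ) ^ d)⁻¹ := by
      apply inv_anti₀ (by positivity)
      exact pow_le_pow_right₀ hω (Nat.le_add_right d m)
    have h2 : ‖∑ ℓ ∈ Finset.range (d + 1),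
        (coefA (kfun d κ) (d - ℓ) d *
            Complex.exp (((d - ℓ : ℕ) : ℂ) * (Complex.I * ω * t))) •
          (Nop L α (kfun d κ) (ℓ + 1) d *
            (NormedSpace.exp ((t : ℂ) • L) * (Fc L α (kfun d κ) ℓ * u₀)))‖ ≤
        ∑ ℓ ∈ Finset.range (d + 1),
          ‖coefA (kfun d κ) (d - ℓ) d‖ * (‖Nop L α (kfun d κ) (ℓ + 1) d‖ *
            (M * ‖Fc L α (kfun d κ) ℓ * u₀‖)) := by
      refine (norm_sum_le _ _).trans (Finset.sum_le_sum fun ℓ _ => ?_)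
      rw [norm_smul, norm_mul]
      have hone : ‖Complex.exp (((d - ℓ : ℕ) : ℂ) * (Complex.I * ω * t))‖ = 1 := by
        have harg : ((d - ℓ : ℕ) : ℂ) * (Complex.I * ω * t)
            = ((((d - ℓ : ℕ) : ℝ) * ω * t : ℝ) : ℂ) * Complex.I := by
          push_cast; ring
        rw [harg, Complex.norm_exp_ofReal_mul_I]
      rw [hone, mul_one]
      refine mul_le_mul_of_nonneg_left ?_ (norm_nonneg _)
      refine (norm_mul_le _ _).trans ?_
      refine mul_le_mul_of_nonneg_left ?_ (norm_nonneg _)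
      refine (norm_mul_le _ _).trans ?_
      exact mul_le_mul_of_nonneg_right hexp (norm_nonneg _)
    calc ((ω:ℝ) ^ (d + m))⁻¹ * ‖∑ ℓ ∈ Finset.range (d + 1),
        (coefA (kfun d κ) (d - ℓ) d *
            Complex.exp (((d - ℓ : ℕ) : ℂ) * (Complex.I * ω * t))) •
          (Nop L α (kfun d κ) (ℓ + 1) d *
            (NormedSpace.exp ((t : ℂ) • L) * (Fc L α (kfun d κ) ℓ * u₀)))‖
        ≤ ((ω:ℝ) ^ d)⁻¹ * (∑ ℓ ∈ Finset.range (d + 1),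
          ‖coefA (kfun d κ) (d - ℓ) d‖ * (‖Nop L α (kfun d κ) (ℓ + 1) d‖ *
            (M * ‖Fc L α (kfun d κ) ℓ * u₀‖))) :=
          mul_le_mul h1 h2 (norm_nonneg _) (by positivity)
      _ = (∑ ℓ ∈ Finset.range (d + 1),
          ‖coefA (kfun d κ) (d - ℓ) d‖ * (‖Nop L α (kfun d κ) (ℓ + 1) d‖ *
            (M * ‖Fc L α (kfun d κ) ℓ * u₀‖))) * ((ω:ℝ) ^ d)⁻¹ := mul_comm _ _
end
end

section
/- For every natural numbers d ≥ 1 and n with n ≥ d, there exists a constant C̃ ≥ 0, independent of ω, such that for all real ω ≥ 1, sup_{t∈[0,t*]} ‖E_n^d(t)‖ ≤ C̃·ω^{−n}. -/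
noncomputable section

variable {A : Type*} [NormedRing A] [NormedAlgebra ℂ A] [CompleteSpace A]

lemma exp_smul_bound (L : A) (T : ℝ) :
    ∃ M : ℝ, 0 ≤ M ∧ ∀ s : ℝ, |s| ≤ T → ‖NormedSpace.exp ((s:ℂ) • L)‖ ≤ M := by
  obtain ⟨C, hC⟩ := isCompact_Icc.exists_bound_of_continuousOn
    (s := Set.Icc (-T) T)
    (((continuous_iff_continuousAt.2 fun x => (NormedSpace.exp_analytic (𝕂 := ℂ) x).continuousAt).comp
        (Complex.continuous_ofReal.smul continuous_const)).continuousOn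
      (f := fun s : ℝ => NormedSpace.exp ((s:ℂ) • L)))
  refine ⟨max C 0, le_max_right _ _, fun s hs => le_trans (hC s ?_) (le_max_left _ _)⟩
  exact ⟨(abs_le.mp hs).1, (abs_le.mp hs).2⟩

lemma norm_cexp_nat_I (m : ℕ) (ω τ : ℝ) :
    ‖Complex.exp ((m:ℂ) * (Complex.I * ω * τ))‖ = 1 := by
  have h : ((m:ℂ) * (Complex.I * ω * τ)) = (((m:ℝ)*ω*τ : ℝ):ℂ) * Complex.I := by
    push_cast; ring
  rw [h, Complex.norm_exp_ofReal_mul_I]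

lemma norm_cexp_I' (ω τ : ℝ) : ‖Complex.exp (Complex.I * ω * τ)‖ = 1 := by
  have h : (Complex.I * (ω:ℂ) * (τ:ℂ)) = ((ω*τ : ℝ):ℂ) * Complex.I := by push_cast; ring
  rw [h, Complex.norm_exp_ofReal_mul_I]

lemma eser_bound (L α u₀ : A) (T : ℝ) (hT : 0 < T) (n : ℕ) (d : ℕ) :
    ∃ C : ℝ, 0 ≤ C ∧ ∀ ω : ℝ, 1 ≤ ω → ∀ t ∈ Set.Icc (0:ℝ) T,
      ‖Eser L α u₀ ω n d t‖ ≤ C * (ω ^ n)⁻¹ := by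
  obtain ⟨M, hM0, hM⟩ := exp_smul_bound L T
  induction d with
  | zero => exact ⟨0, le_rfl, fun ω hω t ht => by simp [Eser]⟩
  | succ d ih =>
    obtain ⟨C₀, hC₀, hIH⟩ := ih
    set K := Finset.Nat.antidiagonalTuple (d+1) (n-(d+1)+1) with hK
    refine ⟨(∑ κ ∈ K, ∑ ℓ ∈ Finset.range (d+1),
        ‖coefB (kfun (d+1) κ) (d+1-ℓ) (d+1)‖ *
          ((M * ‖Nop L α (kfun (d+1) κ) (ℓ+1) (d+1)‖ * M * T) *
            ‖Fc L α (kfun (d+1) κ) ℓ * u₀‖))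
      + M * ‖α‖ * C₀ * T, ?_, ?_⟩
    · apply add_nonneg
      · apply Finset.sum_nonneg; intro κ _
        apply Finset.sum_nonneg; intro ℓ _
        have h1 : (0:ℝ) ≤ M * ‖Nop L α (kfun (d+1) κ) (ℓ+1) (d+1)‖ * M * T :=
          mul_nonneg (mul_nonneg (mul_nonneg hM0 (norm_nonneg _)) hM0) hT.le
        positivity
      · exact mul_nonneg (mul_nonneg (mul_nonneg hM0 (norm_nonneg _)) hC₀) hT.le
    · intro ω hω t ht
      obtain ⟨ht0, htT⟩ := ht
      have hω0 : (0:ℝ) < ω := lt_of_lt_of_le one_pos hω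
      have hωn : (0:ℝ) ≤ (ω ^ n)⁻¹ := by positivity
      have hIomega : ‖((Complex.I * (ω:ℂ)) ^ n)⁻¹‖ = (ω ^ n)⁻¹ := by
        rw [norm_inv, norm_pow, norm_mul, Complex.norm_I, Complex.norm_real,
          Real.norm_eq_abs, one_mul, abs_of_pos hω0]
      -- bound for the inner integrals of the first summand
      have hJ : ∀ κ ∈ K, ∀ ℓ ∈ Finset.range (d+1),
          ‖∫ τ in (0:ℝ)..t,
              Complex.exp (((d + 1 - ℓ : ℕ) : ℂ) * (Complex.I * ω * τ)) •
                (NormedSpace.exp (((t - τ : ℝ) : ℂ) • L) *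
                  Nop L α (kfun (d + 1) κ) (ℓ + 1) (d + 1) *
                  NormedSpace.exp ((τ : ℂ) • L))‖ ≤
            M * ‖Nop L α (kfun (d+1) κ) (ℓ+1) (d+1)‖ * M * T := by
        intro κ _ ℓ _
        set Nκ := Nop L α (kfun (d+1) κ) (ℓ+1) (d+1) with hNκ
        have hMN : (0:ℝ) ≤ M * ‖Nκ‖ * M :=
          mul_nonneg (mul_nonneg hM0 (norm_nonneg _)) hM0
        have key : ‖∫ τ in (0:ℝ)..t,
            Complex.exp (((d + 1 - ℓ : ℕ) : ℂ) * (Complex.I * ω * τ)) •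
              (NormedSpace.exp (((t - τ : ℝ) : ℂ) • L) * Nκ *
                NormedSpace.exp ((τ : ℂ) • L))‖ ≤ (M * ‖Nκ‖ * M) * |t - 0| := by
          apply intervalIntegral.norm_integral_le_of_norm_le_const
          intro τ hτ
          rw [Set.uIoc_of_le ht0] at hτ
          obtain ⟨hτ0, hτt⟩ := hτ
          have h1 : ‖NormedSpace.exp (((t - τ : ℝ) : ℂ) • L)‖ ≤ M := by
            apply hM; rw [abs_of_nonneg (by linarith)]; linarith
          have h2 : ‖NormedSpace.exp ((τ : ℂ) • L)‖ ≤ M := by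
            apply hM; rw [abs_of_nonneg hτ0.le]; linarith
          rw [norm_smul, norm_cexp_nat_I, one_mul]
          calc ‖NormedSpace.exp (((t - τ : ℝ) : ℂ) • L) * Nκ *
                NormedSpace.exp ((τ : ℂ) • L)‖
              ≤ ‖NormedSpace.exp (((t - τ : ℝ) : ℂ) • L) * Nκ‖ *
                ‖NormedSpace.exp ((τ : ℂ) • L)‖ := norm_mul_le _ _
            _ ≤ (‖NormedSpace.exp (((t - τ : ℝ) : ℂ) • L)‖ * ‖Nκ‖) *
                ‖NormedSpace.exp ((τ : ℂ) • L)‖ :=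
                mul_le_mul_of_nonneg_right (norm_mul_le _ _) (norm_nonneg _)
            _ ≤ (M * ‖Nκ‖) * M :=
                mul_le_mul (mul_le_mul_of_nonneg_right h1 (norm_nonneg _)) h2
                  (norm_nonneg _) (mul_nonneg hM0 (norm_nonneg _))
        refine key.trans ?_
        rw [sub_zero, abs_of_nonneg ht0]
        exact mul_le_mul_of_nonneg_left htT hMN
      -- now estimate the two summands
      have hunfold : Eser L α u₀ ω n (d+1) t =
        ((Complex.I * ω) ^ n)⁻¹ •
          (∑ κ ∈ K,
            ∑ ℓ ∈ Finset.range (d + 1),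
              coefB (kfun (d + 1) κ) (d + 1 - ℓ) (d + 1) •
                ((∫ τ in (0:ℝ)..t,
                    Complex.exp (((d + 1 - ℓ : ℕ) : ℂ) * (Complex.I * ω * τ)) •
                      (NormedSpace.exp (((t - τ : ℝ) : ℂ) • L) *
                        Nop L α (kfun (d + 1) κ) (ℓ + 1) (d + 1) *
                        NormedSpace.exp ((τ : ℂ) • L))) *
                  (Fc L α (kfun (d + 1) κ) ℓ * u₀)))
        + ∫ τ in (0:ℝ)..t,
            Complex.exp (Complex.I * ω * τ) •
              (NormedSpace.exp (((t - τ : ℝ) : ℂ) • L) * α * Eser L α u₀ ω n d τ) := rfl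
      rw [hunfold]
      refine (norm_add_le _ _).trans ?_
      have hsum : ‖((Complex.I * (ω:ℂ)) ^ n)⁻¹ •
          (∑ κ ∈ K,
            ∑ ℓ ∈ Finset.range (d + 1),
              coefB (kfun (d + 1) κ) (d + 1 - ℓ) (d + 1) •
                ((∫ τ in (0:ℝ)..t,
                    Complex.exp (((d + 1 - ℓ : ℕ) : ℂ) * (Complex.I * ω * τ)) •
                      (NormedSpace.exp (((t - τ : ℝ) : ℂ) • L) *
                        Nop L α (kfun (d + 1) κ) (ℓ + 1) (d + 1) *
                        NormedSpace.exp ((τ : ℂ) • L))) *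
                  (Fc L α (kfun (d + 1) κ) ℓ * u₀)))‖ ≤
          (∑ κ ∈ K, ∑ ℓ ∈ Finset.range (d+1),
            ‖coefB (kfun (d+1) κ) (d+1-ℓ) (d+1)‖ *
              ((M * ‖Nop L α (kfun (d+1) κ) (ℓ+1) (d+1)‖ * M * T) *
                ‖Fc L α (kfun (d+1) κ) ℓ * u₀‖)) * (ω ^ n)⁻¹ := by
        rw [norm_smul, hIomega, mul_comm]
        apply mul_le_mul_of_nonneg_right _ hωn
        refine (norm_sum_le _ _).trans ?_
        apply Finset.sum_le_sum
        intro κ hκ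
        refine (norm_sum_le _ _).trans ?_
        apply Finset.sum_le_sum
        intro ℓ hℓ
        rw [norm_smul]
        apply mul_le_mul_of_nonneg_left _ (norm_nonneg _)
        refine (norm_mul_le _ _).trans ?_
        exact mul_le_mul_of_nonneg_right (hJ κ hκ ℓ hℓ) (norm_nonneg _)
      have hint : ‖∫ τ in (0:ℝ)..t,
          Complex.exp (Complex.I * ω * τ) •
            (NormedSpace.exp (((t - τ : ℝ) : ℂ) • L) * α * Eser L α u₀ ω n d τ)‖ ≤
          M * ‖α‖ * C₀ * T * (ω ^ n)⁻¹ := by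
        have hMα : (0:ℝ) ≤ M * ‖α‖ * (C₀ * (ω ^ n)⁻¹) :=
          mul_nonneg (mul_nonneg hM0 (norm_nonneg _)) (mul_nonneg hC₀ hωn)
        have key : ‖∫ τ in (0:ℝ)..t,
            Complex.exp (Complex.I * ω * τ) •
              (NormedSpace.exp (((t - τ : ℝ) : ℂ) • L) * α * Eser L α u₀ ω n d τ)‖ ≤
            (M * ‖α‖ * (C₀ * (ω ^ n)⁻¹)) * |t - 0| := by
          apply intervalIntegral.norm_integral_le_of_norm_le_const
          intro τ hτ
          rw [Set.uIoc_of_le ht0] at hτ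
          obtain ⟨hτ0, hτt⟩ := hτ
          have h1 : ‖NormedSpace.exp (((t - τ : ℝ) : ℂ) • L)‖ ≤ M := by
            apply hM; rw [abs_of_nonneg (by linarith)]; linarith
          have h2 : ‖Eser L α u₀ ω n d τ‖ ≤ C₀ * (ω ^ n)⁻¹ :=
            hIH ω hω τ ⟨hτ0.le, by linarith⟩
          rw [norm_smul, norm_cexp_I', one_mul]
          calc ‖NormedSpace.exp (((t - τ : ℝ) : ℂ) • L) * α * Eser L α u₀ ω n d τ‖
              ≤ ‖NormedSpace.exp (((t - τ : ℝ) : ℂ) • L) * α‖ * ‖Eser L α u₀ ω n d τ‖ :=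
                norm_mul_le _ _
            _ ≤ (‖NormedSpace.exp (((t - τ : ℝ) : ℂ) • L)‖ * ‖α‖) * ‖Eser L α u₀ ω n d τ‖ :=
                mul_le_mul_of_nonneg_right (norm_mul_le _ _) (norm_nonneg _)
            _ ≤ (M * ‖α‖) * (C₀ * (ω ^ n)⁻¹) :=
                mul_le_mul (mul_le_mul_of_nonneg_right h1 (norm_nonneg _)) h2
                  (norm_nonneg _) (mul_nonneg hM0 (norm_nonneg _))
        refine key.trans ?_
        rw [sub_zero, abs_of_nonneg ht0]
        calc (M * ‖α‖ * (C₀ * (ω ^ n)⁻¹)) * t ≤ (M * ‖α‖ * (C₀ * (ω ^ n)⁻¹)) * T :=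
              mul_le_mul_of_nonneg_left htT hMα
          _ = M * ‖α‖ * C₀ * T * (ω ^ n)⁻¹ := by ring
      calc _ ≤ (∑ κ ∈ K, ∑ ℓ ∈ Finset.range (d+1),
            ‖coefB (kfun (d+1) κ) (d+1-ℓ) (d+1)‖ *
              ((M * ‖Nop L α (kfun (d+1) κ) (ℓ+1) (d+1)‖ * M * T) *
                ‖Fc L α (kfun (d+1) κ) ℓ * u₀‖)) * (ω ^ n)⁻¹
            + M * ‖α‖ * C₀ * T * (ω ^ n)⁻¹ := add_le_add hsum hint
        _ = _ := by ring

/-- For every `d ≥ 1` and `n ≥ d`, there exists a constant `C̃ ≥ 0`,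
independent of `ω`, such that for all real `ω ≥ 1`,
`sup_{t∈[0,t*]} ‖E_n^d(t)‖ ≤ C̃·ω^{−n}`. -/
theorem stmt13 (L α u₀ : A) (T : ℝ) (hT : 0 < T)
    (d n : ℕ) (hd : 1 ≤ d) (hnd : d ≤ n) :
    ∃ C : ℝ, 0 ≤ C ∧ ∀ ω : ℝ, 1 ≤ ω → ∀ t ∈ Set.Icc (0:ℝ) T,
      ‖Eser L α u₀ ω n d t‖ ≤ C * (ω ^ n)⁻¹ :=
  eser_bound L α u₀ T hT n d
end
end
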